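/- A bounded-below function c : X × A → R ∪ {+∞} on the product of metric spaces X and A is K-inf-compact (i.e., its restriction to K × A is inf-compact for every compact K ⊆ X) if and only if: (a) c is lower semicontinuous, and (b) whenever x^(n) → x in X and a^(n) ∈ A are such that the sequence {c(x^(n), a^(n))} is bounded above, the sequence {a^(n)} has a limit point a ∈ A. -/

import Mathlib

open Filter Topology

theorem stmt18 {X A : Type*} [MetricSpace X] [MetricSpace A]
    (c : X × A → EReal) (m : ℝ) (hbdd : ∀ p, (m : EReal) ≤ c p) :
    (∀ K : Set X, IsCompact K → ∀ l : ℝ,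
        IsCompact {p : X × A | p.1 ∈ K ∧ c p ≤ (l : EReal)}) ↔
    (LowerSemicontinuous c ∧
      ∀ (x : X) (xn : ℕ → X) (an : ℕ → A), Tendsto xn atTop (𝓝 x) →
        (∃ M : ℝ, ∀ n, c (xn n, an n) ≤ (M : EReal)) →
        ∃ a : A, MapClusterPt a atTop an) := by
  constructor
  · intro h
    constructor
    · rw [lowerSemicontinuous_iff_isClosed_preimage]
      intro y
      induction y using EReal.rec with
      | bot =>
        convert isClosed_empty
        ext p
        simp only [Set.mem_preimage, Set.mem_Iic, le_bot_iff, Set.mem_empty_iff_false,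
          iff_false]
        intro hp
        have := hbdd p
        rw [hp] at this
        exact absurd (le_bot_iff.mp this) (EReal.coe_ne_bot m)
      | coe l =>
        rw [← isSeqClosed_iff_isClosed]
        intro u p hu hup
        have hx1 : Tendsto (fun n => (u n).1) atTop (𝓝 p.1) :=
          (continuous_fst.tendsto p).comp hup
        have hK : IsCompact (insert p.1 (Set.range fun n => (u n).1)) :=
          hx1.isCompact_insert_range
        have hS := h _ hK l
        have hmem : ∀ n, u n ∈ {q : X × A | q.1 ∈ insert p.1 (Set.range fun n => (u n).1)
            ∧ c q ≤ (l : EReal)} := fun n =>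
          ⟨Set.mem_insert_of_mem _ ⟨n, rfl⟩, hu n⟩
        have hp : p ∈ {q : X × A | q.1 ∈ insert p.1 (Set.range fun n => (u n).1)
            ∧ c q ≤ (l : EReal)} :=
          hS.isClosed.mem_of_tendsto hup (Eventually.of_forall hmem)
        exact hp.2
      | top =>
        convert isClosed_univ
        ext p
        simp [le_top]
    · rintro x xn an hxn ⟨M, hM⟩
      have hK : IsCompact (insert x (Set.range xn)) := hxn.isCompact_insert_range
      have hS := h _ hK M
      have hmem : ∀ n, (xn n, an n) ∈ {q : X × A | q.1 ∈ insert x (Set.range xn)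
          ∧ c q ≤ (M : EReal)} := fun n => ⟨Set.mem_insert_of_mem _ ⟨n, rfl⟩, hM n⟩
      obtain ⟨q, -, φ, hφ, htends⟩ := hS.tendsto_subseq hmem
      refine ⟨q.2, ?_⟩
      have h2 : Tendsto (fun n => an (φ n)) atTop (𝓝 q.2) :=
        (continuous_snd.tendsto q).comp htends
      have : MapClusterPt q.2 (map φ atTop) an := h2.mapClusterPt
      exact this.mono hφ.tendsto_atTop
  · rintro ⟨hlsc, hcond⟩ K hK l
    rw [isCompact_iff_isSeqCompact]
    intro u hu
    have hx : ∀ n, (u n).1 ∈ K := fun n => (hu n).1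
    obtain ⟨x, hxK, φ, hφ, hxtends⟩ := hK.tendsto_subseq hx
    have hbound : ∃ M : ℝ, ∀ n, c ((fun k => (u (φ k)).1) n, (fun k => (u (φ k)).2) n)
        ≤ (M : EReal) := ⟨l, fun n => (hu (φ n)).2⟩
    obtain ⟨a, ha⟩ := hcond x (fun k => (u (φ k)).1) (fun k => (u (φ k)).2) hxtends hbound
    obtain ⟨ψ, hψ, hatends⟩ := TopologicalSpace.FirstCountableTopology.tendsto_subseq ha
    have htends : Tendsto (fun n => u (φ (ψ n))) atTop (𝓝 (x, a)) := by
      rw [Prod.tendsto_iff]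
      constructor
      · exact hxtends.comp hψ.tendsto_atTop
      · exact hatends
    refine ⟨(x, a), ⟨hxK, ?_⟩, φ ∘ ψ, hφ.comp hψ, ?_⟩
    · by_contra hle
      push_neg at hle
      have := hlsc (x, a) l hle
      have := (htends.eventually this).exists
      obtain ⟨n, hn⟩ := this
      exact absurd (hu (φ (ψ n))).2 (not_le.mpr hn)
    · exact htends
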